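/- Let G be a group with a finite generating set S, let φ : G → H be a surjective group homomorphism, and consider Bernoulli bond percolation on the Cayley graph of (G,S) (edge set G × S, edge (g,s) joining g and g·s) and on the Cayley graph of H with edge set H × S, where the edge (h,s) joins h and h·φ(s). Then for every p ∈ [0,1], the expected cluster size of the identity in the Cayley graph of H is at most the expected cluster size of the identity in the Cayley graph of (G,S): E_p(|C|_H) ≤ E_p(|C|_G) (as elements of [0,∞]). -/

import Mathlib

open MeasureTheory ENNReal

namespace Perc

/-- Percolation configurations on the edge set `E`: each edge is `true` (open) or
`false` (closed). -/
abbrev Config (E : Type*) := E → Bool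

/-- `μ` is the Bernoulli product measure `P_p` with parameter `p` on `{0,1}^E`: the measure
of every finite cylinder event is the corresponding product.  (This determines `μ` uniquely
on the product σ-algebra, since cylinders form a π-system generating it.) -/
def IsBernoulli {E : Type*} (p : ℝ) (μ : Measure (Config E)) : Prop :=
  ∀ (F : Finset E) (σ : E → Bool),
    μ {ω | ∀ e ∈ F, ω e = σ e} =
      ∏ e ∈ F, ENNReal.ofReal (if σ e then p else 1 - p)

variable {G ι : Type*} [Group G]

/-- In the Cayley graph of `G` with edge set `G × ι`, where the edge `(a, i)` joins `a` and
`a * f i` (the function `f : ι → G` lists the generators, with multiplicity), this says that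
vertices `a` and `b` are joined by some open edge of the configuration `ω`. -/
def Step (f : ι → G) (ω : Config (G × ι)) (a b : G) : Prop :=
  ∃ i : ι, (ω (a, i) = true ∧ b = a * f i) ∨ (ω (b, i) = true ∧ a = b * f i)

/-- `x` and `y` are connected by a path of open edges (`x ↔ y`). -/
def Conn (f : ι → G) (ω : Config (G × ι)) (x y : G) : Prop :=
  Relation.ReflTransGen (Step f ω) x y

/-- The open cluster `C` of the identity. -/
def cluster (f : ι → G) (ω : Config (G × ι)) : Set G :=
  {x | Conn f ω 1 x}

/-- The percolation function `θ`: the probability that the cluster of the identity is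
infinite. -/
noncomputable def theta (f : ι → G) (μ : Measure (Config (G × ι))) : ℝ :=
  (μ {ω | (cluster f ω).Infinite}).toReal

/-- The expected cluster size `χ = E(|C|) ∈ [0,∞]` (where `|C| ∈ ℕ∞` is coerced
to `ℝ≥0∞`). -/
noncomputable def chi (f : ι → G) (μ : Measure (Config (G × ι))) : ℝ≥0∞ :=
  ∫⁻ ω, ((cluster f ω).encard : ℝ≥0∞) ∂μ

/-- The critical probability `p_c = inf {p ∈ [0,1] | θ(p) > 0}`, with the convention
`p_c = 1` if `θ` vanishes on `[0,1]`; here `μ p` is the percolation measure at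
parameter `p`. -/
noncomputable def pc (f : ι → G) (μ : ℝ → Measure (Config (G × ι))) : ℝ :=
  sInf ({p | p ∈ Set.Icc (0 : ℝ) 1 ∧ 0 < theta f (μ p)} ∪ {1})

/-- The word metric on `G` with respect to the generators `f i`: the length of a shortest
word in the generators and their inverses taking `x` to `y`.  (When the generators generate
`G`, this is the graph distance in the Cayley graph.) -/
noncomputable def wdist (f : ι → G) (x y : G) : ℕ :=
  sInf {n : ℕ | ∃ l : List G, l.length = n ∧
    (∀ g ∈ l, (∃ i, f i = g) ∨ (∃ i, (f i)⁻¹ = g)) ∧ x * l.prod = y}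

/-- Schonmann's critical point
`p_exp = sup {p ∈ [0,1] | ∃ c > 0, γ > 0, ∀ x y, P_p(x ↔ y) ≤ c·exp(-γ·dist(x,y))}`. -/
noncomputable def pexp (f : ι → G) (μ : ℝ → Measure (Config (G × ι))) : ℝ :=
  sSup {p | p ∈ Set.Icc (0 : ℝ) 1 ∧ ∃ c > 0, ∃ γ > 0, ∀ x y : G,
    (μ p {ω | Conn f ω x y}).toReal ≤ c * Real.exp (-γ * (wdist f x y : ℝ))}

/-- The walk-through function `g(p,t) = 1 - ∑_{n≥1} (1-t)^{n-1} P_p(|C| = n)` of a Cayley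
graph; here `μ` is the percolation measure at parameter `p`. -/
noncomputable def wt (f : ι → G) (μ : Measure (Config (G × ι))) (t : ℝ) : ℝ :=
  1 - ∑' n : ℕ, (1 - t) ^ n * (μ {ω | (cluster f ω).encard = ((n + 1 : ℕ) : ℕ∞)}).toReal

/-- The ball of radius `j`: all products of at most `j` elements of `S ∪ S⁻¹`. -/
def ball (S : Set G) (j : ℕ) : Set G :=
  {g | ∃ l : List G, l.length ≤ j ∧ (∀ x ∈ l, x ∈ S ∨ x⁻¹ ∈ S) ∧ l.prod = g}

/-- The Cheeger constant `h = inf_K |∂K| / |K|`, the infimum over nonempty finite vertex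
sets `K` of the number of edges `(a, i)` (joining `a` and `a * f i`) with exactly one
endpoint in `K`, divided by `|K|`. -/
noncomputable def cheeger (f : ι → G) : ℝ :=
  ⨅ K : {K : Finset G // K.Nonempty},
    (Nat.card {e : G × ι // Xor' (e.1 ∈ K.1) (e.1 * f e.2 ∈ K.1)} : ℝ) / (K.1.card : ℝ)

/-- The open cluster of the identity in the subgraph induced on the vertex set `V`: only
open edges with both endpoints in `V` may be used. -/
def clusterIn (f : ι → G) (V : Set G) (ω : Config (G × ι)) : Set G :=
  {x | Relation.ReflTransGen (fun a b => Step f ω a b ∧ a ∈ V ∧ b ∈ V) 1 x}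

/-- The generators of `G` given by a generating set `S` (one edge orbit per element
of `S`). -/
def setGens (S : Set G) : S → G := Subtype.val

/-- The generators of the free product `G₁ * G₂` given by the disjoint union `S₁ ⊔ S₂` of
generating sets, embedded via the canonical monomorphisms. -/
def coprodGens {G₁ G₂ : Type*} [Group G₁] [Group G₂] (S₁ : Set G₁) (S₂ : Set G₂) :
    S₁ ⊕ S₂ → Monoid.Coprod G₁ G₂ :=
  Sum.elim (fun s => Monoid.Coprod.inl (s : G₁)) (fun s => Monoid.Coprod.inr (s : G₂))

/-- The generators of the free product `G₁ * ⋯ * G_n` given by the disjoint union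
`S₁ ⊔ ⋯ ⊔ S_n` of generating sets, embedded via the canonical monomorphisms. -/
def coprodIGens {n : ℕ} {G : Fin n → Type*} [∀ i, Group (G i)] (S : ∀ i, Set (G i)) :
    (Σ i, S i) → Monoid.CoprodI G :=
  fun x => Monoid.CoprodI.of (x.2 : G x.1)

/-- The image of a list of syllables in the free product `G₁ * G₂`. -/
def sylProd {G₁ G₂ : Type*} [Group G₁] [Group G₂] (l : List (G₁ ⊕ G₂)) :
    Monoid.Coprod G₁ G₂ :=
  (l.map (Sum.elim (fun g => Monoid.Coprod.inl g) (fun h => Monoid.Coprod.inr h))).prod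

/-- The set `P₁` of nontrivial elements of `G₁ * G₂` whose normal form begins with a
nontrivial syllable of `G₁`: elements represented by a nonempty alternating product of
nontrivial syllables, the first syllable lying in `G₁`.  (Such a representation is the
normal form, which is unique.) -/
def beginsLeft {G₁ G₂ : Type*} [Group G₁] [Group G₂] (x : Monoid.Coprod G₁ G₂) : Prop :=
  ∃ l : List (G₁ ⊕ G₂), l ≠ [] ∧ (∀ a ∈ l, a ≠ Sum.inl 1 ∧ a ≠ Sum.inr 1) ∧
    l.Chain' (fun a b => a.isLeft ≠ b.isLeft) ∧
    (∃ g : G₁, l.head? = some (Sum.inl g)) ∧ sylProd l = x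

/-- The set `P₂` of nontrivial elements of `G₁ * G₂` whose normal form begins with a
nontrivial syllable of `G₂`. -/
def beginsRight {G₁ G₂ : Type*} [Group G₁] [Group G₂] (x : Monoid.Coprod G₁ G₂) : Prop :=
  ∃ l : List (G₁ ⊕ G₂), l ≠ [] ∧ (∀ a ∈ l, a ≠ Sum.inl 1 ∧ a ≠ Sum.inr 1) ∧
    l.Chain' (fun a b => a.isLeft ≠ b.isLeft) ∧
    (∃ h : G₂, l.head? = some (Sum.inr h)) ∧ sylProd l = x

end Perc

open Perc

namespace PercAux

open Perc MeasureTheory ENNReal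

section General

variable {V ι : Type*}

lemma step_mono [Group V] (f : ι → V) {ω ω' : Config (V × ι)}
    (hle : ∀ e, ω e = true → ω' e = true) {a b : V} (h : Step f ω a b) : Step f ω' a b := by
  obtain ⟨i, hi | hi⟩ := h
  · exact ⟨i, Or.inl ⟨hle _ hi.1, hi.2⟩⟩
  · exact ⟨i, Or.inr ⟨hle _ hi.1, hi.2⟩⟩

lemma conn_mono [Group V] (f : ι → V) {ω ω' : Config (V × ι)}
    (hle : ∀ e, ω e = true → ω' e = true) {x y : V} (h : Conn f ω x y) : Conn f ω' x y :=
  Relation.ReflTransGen.mono (r := Step f ω) (p := Step f ω') (fun _ _ hs => step_mono f hle hs) x y h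

open scoped Classical in
/-- Restriction of a configuration to a finite edge set (all other edges closed). -/
noncomputable def restr (E : Finset (V × ι)) (ω : Config (V × ι)) : Config (V × ι) :=
  fun e => if e ∈ E then ω e else false

lemma restr_eq_of_agree (E : Finset (V × ι)) {ω ω' : Config (V × ι)}
    (h : ∀ e ∈ E, ω e = ω' e) : restr E ω = restr E ω' := by
  funext e
  simp only [restr]
  split_ifs with he
  · exact h e he
  · rfl

lemma restr_le (E : Finset (V × ι)) (ω : Config (V × ι)) :
    ∀ e, restr E ω e = true → ω e = true := by
  intro e he
  simp only [restr] at he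
  split_ifs at he
  exact he

lemma restr_mem (E : Finset (V × ι)) (ω : Config (V × ι)) {e : V × ι} (he : e ∈ E) :
    restr E ω e = ω e := by simp [restr, he]

lemma restr_mono_le {E E' : Finset (V × ι)} (hEE : E ⊆ E') (ω : Config (V × ι)) :
    ∀ e, restr E ω e = true → restr E' ω e = true := by
  intro e he
  simp only [restr] at he ⊢
  by_cases h1 : e ∈ E
  · rw [if_pos h1] at he
    rw [if_pos (hEE h1)]
    exact he
  · rw [if_neg h1] at he
    exact absurd he (by simp)

lemma measurableSet_depends (E : Finset (V × ι)) (A : Set (Config (V × ι)))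
    (hA : ∀ ω ω', (∀ e ∈ E, ω e = ω' e) → ω ∈ A → ω' ∈ A) : MeasurableSet A := by
  classical
  have hr : Measurable (fun ω : Config (V × ι) => (fun e : E => ω e.1)) :=
    measurable_pi_lambda _ fun e => measurable_pi_apply _
  have hAeq : A = (fun ω : Config (V × ι) => (fun e : E => ω e.1)) ⁻¹'
      ((fun ω : Config (V × ι) => (fun e : E => ω e.1)) '' A) := by
    apply Set.Subset.antisymm (Set.subset_preimage_image _ _)
    rintro ω ⟨ω', hω', heq⟩
    exact hA ω' ω (fun e he => congrFun heq ⟨e, he⟩) hω'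
  rw [hAeq]
  exact hr (Set.Finite.measurableSet (Set.toFinite _))

lemma conn_iff_exists_finset [Group V] (f : ι → V) (ω : Config (V × ι)) (x y : V) :
    Conn f ω x y ↔ ∃ E : Finset (V × ι), Conn f (restr E ω) x y := by
  classical
  constructor
  · intro h
    induction h with
    | refl => exact ⟨∅, Relation.ReflTransGen.refl⟩
    | @tail b c _ hbc ih =>
      obtain ⟨E, hE⟩ := ih
      obtain ⟨i, hi | hi⟩ := hbc
      · refine ⟨insert (b, i) E, Relation.ReflTransGen.tail
          (conn_mono f (restr_mono_le (Finset.subset_insert _ _) ω) hE)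
          ⟨i, Or.inl ⟨?_, hi.2⟩⟩⟩
        rw [restr_mem _ _ (Finset.mem_insert_self _ _)]; exact hi.1
      · refine ⟨insert (c, i) E, Relation.ReflTransGen.tail
          (conn_mono f (restr_mono_le (Finset.subset_insert _ _) ω) hE)
          ⟨i, Or.inr ⟨?_, hi.2⟩⟩⟩
        rw [restr_mem _ _ (Finset.mem_insert_self _ _)]; exact hi.1
  · rintro ⟨E, hE⟩
    exact conn_mono f (restr_le E ω) hE

lemma measurableSet_connRestr [Group V] (f : ι → V) (E : Finset (V × ι)) (x y : V) :
    MeasurableSet {ω : Config (V × ι) | Conn f (restr E ω) x y} := by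
  refine measurableSet_depends E _ (fun ω ω' hag h => ?_)
  have : restr E ω' = restr E ω := restr_eq_of_agree E (fun e he => (hag e he).symm)
  simpa only [Set.mem_setOf_eq, this] using h

lemma measurableSet_conn [Group V] [Countable V] [Countable ι] (f : ι → V) (x y : V) :
    MeasurableSet {ω : Config (V × ι) | Conn f ω x y} := by
  have : {ω : Config (V × ι) | Conn f ω x y} =
      ⋃ E : Finset (V × ι), {ω | Conn f (restr E ω) x y} := by
    ext ω
    simp only [Set.mem_setOf_eq, Set.mem_iUnion]
    exact conn_iff_exists_finset f ω x y
  rw [this]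
  exact MeasurableSet.iUnion fun E => measurableSet_connRestr f E x y

lemma measure_conn_eq_iSup [Group V] [Countable V] [Countable ι] (f : ι → V)
    (μ : Measure (Config (V × ι))) (x y : V) :
    μ {ω | Conn f ω x y} = ⨆ E : Finset (V × ι), μ {ω | Conn f (restr E ω) x y} := by
  have heq : {ω : Config (V × ι) | Conn f ω x y} =
      ⋃ E : Finset (V × ι), {ω | Conn f (restr E ω) x y} := by
    ext ω
    simp only [Set.mem_setOf_eq, Set.mem_iUnion]
    exact conn_iff_exists_finset f ω x y
  have hmono : Monotone (fun E : Finset (V × ι) => {ω : Config (V × ι) | Conn f (restr E ω) x y}) :=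
    fun E E' hEE ω hω => conn_mono f (restr_mono_le hEE ω) hω
  rw [heq, hmono.directed_le.measure_iUnion]

lemma chi_eq_tsum [Group V] [Countable V] [Countable ι] (f : ι → V)
    (μ : Measure (Config (V × ι))) :
    chi f μ = ∑' y : V, μ {ω | Conn f ω 1 y} := by
  have h1 : ∀ ω : Config (V × ι), ((cluster f ω).encard : ℝ≥0∞) =
      ∑' y : V, Set.indicator {ω' : Config (V × ι) | Conn f ω' 1 y}
        (1 : Config (V × ι) → ℝ≥0∞) ω := by
    intro ω
    rw [← ENNReal.tsum_set_one (cluster f ω),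
      tsum_subtype (cluster f ω) (fun _ => (1 : ℝ≥0∞))]
    refine tsum_congr fun y => ?_
    by_cases h : Conn f ω 1 y
    · simp [Set.indicator_apply, h, cluster]
    · simp [Set.indicator_apply, h, cluster]
  rw [chi]
  simp only [h1]
  rw [lintegral_tsum (fun y => (measurable_one.indicator (measurableSet_conn f 1 y)).aemeasurable)]
  congr 1
  funext y
  exact lintegral_indicator_one (measurableSet_conn f 1 y)

end General

end PercAux
namespace PercAux

open Perc MeasureTheory ENNReal

set_option linter.unusedSectionVars false

section Countable

variable {G : Type*} [Group G]

lemma countable_of_closure_eq_top {S : Set G} (hfin : S.Finite)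
    (hgen : Subgroup.closure S = ⊤) : Countable G := by
  haveI := hfin.to_subtype
  have key : ∀ g : G, ∃ l : List (S × Bool),
      (l.map fun x => if x.2 then (x.1 : G) else (x.1 : G)⁻¹).prod = g := by
    intro g
    have hg : g ∈ Subgroup.closure S := by rw [hgen]; exact Subgroup.mem_top g
    refine Subgroup.closure_induction
      (p := fun g _ => ∃ l : List (S × Bool),
        (l.map fun x => if x.2 then (x.1 : G) else (x.1 : G)⁻¹).prod = g)
      ?_ ?_ ?_ ?_ hg
    · intro x hx; exact ⟨[(⟨x, hx⟩, true)], by simp⟩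
    · exact ⟨[], by simp⟩
    · rintro x y _ _ ⟨l1, h1⟩ ⟨l2, h2⟩
      exact ⟨l1 ++ l2, by rw [List.map_append, List.prod_append, h1, h2]⟩
    · rintro x _ ⟨l, hl⟩
      refine ⟨l.reverse.map (fun y => (y.1, !y.2)), ?_⟩
      rw [← hl]
      clear hl
      induction l with
      | nil => simp
      | cons a t ih =>
        rw [List.reverse_cons, List.map_append, List.map_append, List.prod_append, ih]
        obtain ⟨s, b⟩ := a
        cases b <;> simp [mul_inv_rev]
  have hsurj : Function.Surjective
      (fun l : List (S × Bool) => (l.map fun x => if x.2 then (x.1 : G) else (x.1 : G)⁻¹).prod) :=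
    fun g => key g
  exact hsurj.countable

end Countable

section Explore

variable {G H : Type*} [Group G] [Group H] {S : Set G} (φ : G →* H)

open scoped Classical

/-- A fixed section of `φ` sending `1` to `1`. -/
noncomputable def lift0 (hφ : Function.Surjective φ) : H → G :=
  fun h => if h = 1 then 1 else Function.surjInv hφ h

lemma phi_lift0 (hφ : Function.Surjective φ) (h : H) : φ (lift0 φ hφ h) = h := by
  unfold lift0
  split_ifs with h1
  · simp [h1]
  · exact Function.surjInv_eq hφ h

variable [LinearOrder (H × S)]

/-- Candidate edges that can newly reach the vertex `h'` from the region already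
explored (encoded in the partial lift `ψ`). -/
noncomputable def newCands (E : Finset (H × S)) (υ : H × S → Bool)
    (ψ : H → Option G) (h' : H) : Finset (H × S) :=
  E.filter fun e => υ e = true ∧
    (((ψ e.1).isSome = true ∧ e.1 * φ (e.2 : G) = h') ∨
      ((ψ (e.1 * φ (e.2 : G))).isSome = true ∧ e.1 = h'))

lemma mem_newCands {E : Finset (H × S)} {υ : H × S → Bool} {ψ : H → Option G} {h' : H}
    {e : H × S} : e ∈ newCands φ E υ ψ h' ↔ e ∈ E ∧ υ e = true ∧
      (((ψ e.1).isSome = true ∧ e.1 * φ (e.2 : G) = h') ∨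
        ((ψ (e.1 * φ (e.2 : G))).isSome = true ∧ e.1 = h')) := by
  unfold newCands
  rw [Finset.mem_filter]

/-- The selected candidate edge (if any). -/
noncomputable def pick (E : Finset (H × S)) (υ : H × S → Bool)
    (ψ : H → Option G) (h' : H) : Option (H × S) :=
  if hc : (newCands φ E υ ψ h').Nonempty then some ((newCands φ E υ ψ h').min' hc) else none

lemma pick_mem {E : Finset (H × S)} {υ : H × S → Bool} {ψ : H → Option G} {h' : H}
    {e : H × S} (he : pick φ E υ ψ h' = some e) : e ∈ newCands φ E υ ψ h' := by
  unfold pick at he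
  split_ifs at he with hc
  obtain rfl := Option.some_injective _ he
  exact Finset.min'_mem _ hc

lemma pick_isSome {E : Finset (H × S)} {υ : H × S → Bool} {ψ : H → Option G} {h' : H}
    (hc : (newCands φ E υ ψ h').Nonempty) : (pick φ E υ ψ h').isSome = true := by
  unfold pick
  rw [dif_pos hc]
  rfl

lemma pick_congr {E : Finset (H × S)} {υ υ' : H × S → Bool} {ψ : H → Option G} {h' : H}
    (hcand : newCands φ E υ ψ h' = newCands φ E υ' ψ h') :
    pick φ E υ ψ h' = pick φ E υ' ψ h' := by
  simp only [pick, hcand]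

/-- The lift of the newly reached endpoint of the edge `e`. -/
noncomputable def extendPsi (ψ : H → Option G) (e : H × S) : Option G :=
  match ψ e.1 with
  | some g => some (g * (e.2 : G))
  | none => (ψ (e.1 * φ (e.2 : G))).map fun g => g * ((e.2 : G))⁻¹

lemma extendPsi_of_some {ψ : H → Option G} {e : H × S} {g : G} (hg : ψ e.1 = some g) :
    extendPsi φ ψ e = some (g * (e.2 : G)) := by
  unfold extendPsi
  rw [hg]

lemma extendPsi_of_none {ψ : H → Option G} {e : H × S} (hg : ψ e.1 = none) :
    extendPsi φ ψ e = (ψ (e.1 * φ (e.2 : G))).map fun g => g * ((e.2 : G))⁻¹ := by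
  unfold extendPsi
  rw [hg]

/-- One parallel round of breadth-first exploration, extending the partial lift `ψ`. -/
noncomputable def stepPsi (E : Finset (H × S)) (υ : H × S → Bool)
    (ψ : H → Option G) : H → Option G := fun h' =>
  match ψ h' with
  | some g => some g
  | none => (pick φ E υ ψ h').bind (extendPsi φ ψ)

lemma stepPsi_of_some {E : Finset (H × S)} {υ : H × S → Bool} {ψ : H → Option G} {h' : H}
    {g : G} (hg : ψ h' = some g) : stepPsi φ E υ ψ h' = some g := by
  unfold stepPsi
  rw [hg]

lemma stepPsi_of_none {E : Finset (H × S)} {υ : H × S → Bool} {ψ : H → Option G} {h' : H}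
    (hg : ψ h' = none) :
    stepPsi φ E υ ψ h' = (pick φ E υ ψ h').bind (extendPsi φ ψ) := by
  unfold stepPsi
  rw [hg]

lemma stepPsi_congr {E : Finset (H × S)} {υ υ' : H × S → Bool} {ψ : H → Option G}
    (hcand : ∀ h', ψ h' = none → newCands φ E υ ψ h' = newCands φ E υ' ψ h') :
    stepPsi φ E υ ψ = stepPsi φ E υ' ψ := by
  funext h'
  cases hψ : ψ h' with
  | some g => rw [stepPsi_of_some φ hψ, stepPsi_of_some φ hψ]
  | none =>
    rw [stepPsi_of_none φ hψ, stepPsi_of_none φ hψ, pick_congr φ (hcand h' hψ)]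

/-- The exploration process: iterated rounds starting from the lift `1 ↦ 1`. -/
noncomputable def psiSeq (E : Finset (H × S)) (υ : H × S → Bool) : ℕ → H → Option G :=
  fun n => (stepPsi φ E υ)^[n] (fun h => if h = 1 then some (1 : G) else none)

lemma psiSeq_succ (E : Finset (H × S)) (υ : H × S → Bool) (n : ℕ) :
    psiSeq φ E υ (n + 1) = stepPsi φ E υ (psiSeq φ E υ n) :=
  Function.iterate_succ_apply' _ _ _

lemma psiSeq_persist {E : Finset (H × S)} {υ : H × S → Bool} {n : ℕ} {h : H} {g : G}
    (hg : psiSeq φ E υ n h = some g) : psiSeq φ E υ (n + 1) h = some g := by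
  rw [psiSeq_succ]
  exact stepPsi_of_some φ hg

lemma psiSeq_persist_le {E : Finset (H × S)} {υ : H × S → Bool} {m n : ℕ} {h : H} {g : G}
    (hmn : m ≤ n) (hg : psiSeq φ E υ m h = some g) : psiSeq φ E υ n h = some g := by
  obtain ⟨k, rfl⟩ := Nat.exists_eq_add_of_le hmn
  clear hmn
  induction k with
  | zero => exact hg
  | succ k ih => rw [← Nat.add_assoc]; exact psiSeq_persist φ ih

lemma phi_of_psiSeq {E : Finset (H × S)} {υ : H × S → Bool} :
    ∀ {n : ℕ} {h : H} {g : G}, psiSeq φ E υ n h = some g → φ g = h := by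
  intro n
  induction n with
  | zero =>
    intro h g hg
    simp only [psiSeq, Function.iterate_zero, id_eq] at hg
    split_ifs at hg with h1
    · obtain rfl : (1 : G) = g := Option.some_injective _ hg
      simp [h1]
  | succ n ih =>
    intro h g hg
    rw [psiSeq_succ] at hg
    cases hψ : psiSeq φ E υ n h with
    | some g0 =>
      rw [stepPsi_of_some φ hψ] at hg
      obtain rfl := Option.some_injective _ hg
      exact ih hψ
    | none =>
      rw [stepPsi_of_none φ hψ] at hg
      obtain ⟨e, hpick, hext⟩ := Option.bind_eq_some_iff.mp hg
      have hmem := (mem_newCands φ).mp (pick_mem φ hpick)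
      obtain ⟨heE, hυ, hD⟩ := hmem
      cases hfe : psiSeq φ E υ n e.1 with
      | some g1 =>
        rw [extendPsi_of_some φ hfe] at hext
        obtain rfl := Option.some_injective _ hext
        have hend : e.1 * φ (e.2 : G) = h := by
          rcases hD with ⟨_, hend⟩ | ⟨hbs, he1⟩
          · exact hend
          · rw [he1, hψ] at hfe
            exact absurd hfe (by simp)
        rw [map_mul, ih hfe, hend]
      | none =>
        rw [extendPsi_of_none φ hfe] at hext
        rcases hD with ⟨hs, _⟩ | ⟨hbs, he1⟩
        · rw [hfe] at hs
          exact absurd hs (by simp)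
        · obtain ⟨g0, hg0⟩ := Option.isSome_iff_exists.mp hbs
          rw [hg0] at hext
          obtain rfl := Option.some_injective _ hext.symm
          rw [map_mul, map_inv, ih hg0, he1]
          group

/-- `h` is eventually reached by the exploration. -/
def reachedF (E : Finset (H × S)) (υ : H × S → Bool) (h : H) : Prop :=
  ∃ n, (psiSeq φ E υ n h).isSome = true

/-- The first time `h` is reached. -/
noncomputable def timF (E : Finset (H × S)) (υ : H × S → Bool) (h : H) : ℕ :=
  sInf {n | (psiSeq φ E υ n h).isSome = true}

/-- The lift of `h` produced by the exploration (a fixed section off the explored region). -/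
noncomputable def ellF (hφ : Function.Surjective φ) (E : Finset (H × S)) (υ : H × S → Bool)
    (h : H) : G :=
  (psiSeq φ E υ (timF φ E υ h) h).getD (lift0 φ hφ h)

lemma tim_mem {E : Finset (H × S)} {υ : H × S → Bool} {h : H} (hr : reachedF φ E υ h) :
    (psiSeq φ E υ (timF φ E υ h) h).isSome = true :=
  Nat.sInf_mem hr

lemma tim_le {E : Finset (H × S)} {υ : H × S → Bool} {h : H} {n : ℕ}
    (hn : (psiSeq φ E υ n h).isSome = true) : timF φ E υ h ≤ n :=
  Nat.sInf_le hn

lemma not_reached_none {E : Finset (H × S)} {υ : H × S → Bool} {h : H}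
    (hr : ¬ reachedF φ E υ h) (n : ℕ) : psiSeq φ E υ n h = none := by
  rw [← Option.not_isSome_iff_eq_none]
  exact fun hs => hr ⟨n, hs⟩

lemma ell_eq {E : Finset (H × S)} {υ : H × S → Bool} {n : ℕ} {h : H} {g : G}
    (hφ : Function.Surjective φ) (hg : psiSeq φ E υ n h = some g) :
    ellF φ hφ E υ h = g := by
  have hr : reachedF φ E υ h := ⟨n, by rw [hg]; rfl⟩
  obtain ⟨g0, hg0⟩ := Option.isSome_iff_exists.mp (tim_mem φ hr)
  have hle : timF φ E υ h ≤ n := tim_le φ (by rw [hg]; rfl)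
  have := psiSeq_persist_le φ hle hg0
  rw [this] at hg
  obtain rfl := Option.some_injective _ hg
  rw [ellF, hg0]
  rfl

lemma phi_ell (hφ : Function.Surjective φ) (E : Finset (H × S)) (υ : H × S → Bool) (h : H) :
    φ (ellF φ hφ E υ h) = h := by
  by_cases hr : reachedF φ E υ h
  · obtain ⟨g0, hg0⟩ := Option.isSome_iff_exists.mp (tim_mem φ hr)
    rw [ellF, hg0]
    exact phi_of_psiSeq φ hg0
  · rw [ellF, not_reached_none φ hr]
    exact phi_lift0 φ hφ h

lemma psiSeq_zero_one (E : Finset (H × S)) (υ : H × S → Bool) :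
    psiSeq φ E υ 0 1 = some (1 : G) := by
  simp [psiSeq]

lemma reached_one (E : Finset (H × S)) (υ : H × S → Bool) : reachedF φ E υ 1 :=
  ⟨0, by rw [psiSeq_zero_one]; rfl⟩

lemma ell_one (hφ : Function.Surjective φ) (E : Finset (H × S)) (υ : H × S → Bool) :
    ellF φ hφ E υ 1 = 1 :=
  ell_eq φ hφ (psiSeq_zero_one φ E υ)

lemma tim_eq_succ {E : Finset (H × S)} {υ : H × S → Bool} {n : ℕ} {h : H}
    (h0 : psiSeq φ E υ n h = none) (h1 : (psiSeq φ E υ (n+1) h).isSome = true) :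
    timF φ E υ h = n + 1 := by
  have hle : timF φ E υ h ≤ n + 1 := tim_le φ h1
  have hgt : ¬ timF φ E υ h ≤ n := by
    intro hle'
    obtain ⟨g0, hg0⟩ := Option.isSome_iff_exists.mp (tim_mem φ ⟨n+1, h1⟩)
    have := psiSeq_persist_le φ hle' hg0
    rw [this] at h0
    exact Option.some_ne_none _ h0
  omega

/-- The `G`-edge from which the exploration reads the state of the `H`-edge `e`. -/
noncomputable def LiftE (hφ : Function.Surjective φ) (E : Finset (H × S)) (υ : H × S → Bool)
    (e : H × S) : G × S :=
  (if reachedF φ E υ e.1 ∧ (¬ reachedF φ E υ (e.1 * φ (e.2 : G)) ∨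
      timF φ E υ e.1 ≤ timF φ E υ (e.1 * φ (e.2 : G))) then ellF φ hφ E υ e.1
   else if reachedF φ E υ (e.1 * φ (e.2 : G)) then
     ellF φ hφ E υ (e.1 * φ (e.2 : G)) * ((e.2 : S) : G)⁻¹
   else lift0 φ hφ e.1, e.2)

lemma LiftE_fst (hφ : Function.Surjective φ) (E : Finset (H × S)) (υ : H × S → Bool)
    (e : H × S) : φ (LiftE φ hφ E υ e).1 = e.1 := by
  unfold LiftE
  dsimp only
  split_ifs with h1 h2
  · exact phi_ell φ hφ E υ e.1
  · rw [map_mul, map_inv, phi_ell φ hφ E υ]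
    group
  · exact phi_lift0 φ hφ e.1

lemma LiftE_inj (hφ : Function.Surjective φ) (E : Finset (H × S)) (υ : H × S → Bool) :
    Function.Injective (LiftE φ hφ E υ) := by
  intro e e' heq
  have h1 : φ (LiftE φ hφ E υ e).1 = φ (LiftE φ hφ E υ e').1 := by rw [heq]
  rw [LiftE_fst, LiftE_fst] at h1
  have h2 : (LiftE φ hφ E υ e).2 = (LiftE φ hφ E υ e').2 := by rw [heq]
  exact Prod.ext h1 h2

lemma step_isSome {E : Finset (H × S)} {υ : H × S → Bool} {n : ℕ} {h' : H}
    (hnone : psiSeq φ E υ n h' = none)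
    (hc : (newCands φ E υ (psiSeq φ E υ n) h').Nonempty) :
    (psiSeq φ E υ (n + 1) h').isSome = true := by
  rw [psiSeq_succ, stepPsi_of_none φ hnone]
  obtain ⟨e, he⟩ := Option.isSome_iff_exists.mp (pick_isSome φ hc)
  rw [he, Option.bind_some]
  obtain ⟨_, _, hD⟩ := (mem_newCands φ).mp (pick_mem φ he)
  cases hfe : psiSeq φ E υ n e.1 with
  | some g1 => rw [extendPsi_of_some φ hfe]; rfl
  | none =>
    rw [extendPsi_of_none φ hfe]
    rcases hD with ⟨hs, _⟩ | ⟨hbs, _⟩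
    · rw [hfe] at hs
      exact absurd hs (by simp)
    · simpa using hbs

lemma complete (hφ : Function.Surjective φ) {E : Finset (H × S)} {υ : H × S → Bool}
    (hsupp : ∀ e, υ e = true → e ∈ E) {h : H}
    (hconn : Conn (fun s : S => φ (s : G)) υ 1 h) : reachedF φ E υ h := by
  induction hconn with
  | refl => exact reached_one φ E υ
  | @tail b c _ hbc ih =>
    obtain ⟨n, hn⟩ := ih
    by_cases hc0 : (psiSeq φ E υ n c).isSome = true
    · exact ⟨n, hc0⟩
    · have hnone : psiSeq φ E υ n c = none :=
        Option.not_isSome_iff_eq_none.mp (by simpa using hc0)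
      obtain ⟨i, hi | hi⟩ := hbc
      · have hcand : (b, i) ∈ newCands φ E υ (psiSeq φ E υ n) c :=
          (mem_newCands φ).mpr ⟨hsupp _ hi.1, hi.1, Or.inl ⟨hn, hi.2.symm⟩⟩
        exact ⟨n + 1, step_isSome φ hnone ⟨_, hcand⟩⟩
      · have hcand : (c, i) ∈ newCands φ E υ (psiSeq φ E υ n) c := by
          refine (mem_newCands φ).mpr ⟨hsupp _ hi.1, hi.1, Or.inr ⟨?_, rfl⟩⟩
          rw [← hi.2]
          exact hn
        exact ⟨n + 1, step_isSome φ hnone ⟨_, hcand⟩⟩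

lemma sound (hφ : Function.Surjective φ) {E : Finset (H × S)} {υ : H × S → Bool}
    {τ : Config (G × S)} (hcyl : ∀ e ∈ E, τ (LiftE φ hφ E υ e) = υ e) :
    ∀ (n : ℕ) (h : H), (psiSeq φ E υ n h).isSome = true →
      Conn (setGens S) τ 1 (ellF φ hφ E υ h) := by
  intro n
  induction n with
  | zero =>
    intro h hs
    simp only [psiSeq, Function.iterate_zero, id_eq] at hs
    split_ifs at hs with h1
    · subst h1
      rw [ell_one φ hφ E υ]
      exact Relation.ReflTransGen.refl
    · exact absurd hs (by simp)
  | succ n ih =>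
    intro h hs
    cases hψ : psiSeq φ E υ n h with
    | some g => exact ih h (by rw [hψ]; rfl)
    | none =>
      obtain ⟨g, hgval⟩ := Option.isSome_iff_exists.mp hs
      have htim_h : timF φ E υ h = n + 1 := tim_eq_succ φ hψ hs
      have hg' := hgval
      rw [psiSeq_succ, stepPsi_of_none φ hψ] at hg'
      obtain ⟨e, hpick, hext⟩ := Option.bind_eq_some_iff.mp hg'
      obtain ⟨heE, hυ, hD⟩ := (mem_newCands φ).mp (pick_mem φ hpick)
      have hellh : ellF φ hφ E υ h = g := ell_eq φ hφ hgval
      cases hfe : psiSeq φ E υ n e.1 with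
      | some g1 =>
        rw [extendPsi_of_some φ hfe] at hext
        obtain rfl := Option.some_injective _ hext
        have hend : e.1 * φ (e.2 : G) = h := by
          rcases hD with ⟨_, hend⟩ | ⟨hbs, he1⟩
          · exact hend
          · rw [he1, hψ] at hfe
            exact (Option.some_ne_none _ hfe.symm).elim
        have hre1 : reachedF φ E υ e.1 := ⟨n, by rw [hfe]; rfl⟩
        have htim1 : timF φ E υ e.1 ≤ n := tim_le φ (by rw [hfe]; rfl)
        have hell1 : ellF φ hφ E υ e.1 = g1 := ell_eq φ hφ hfe
        have hcond : reachedF φ E υ e.1 ∧ (¬ reachedF φ E υ (e.1 * φ (e.2 : G)) ∨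
            timF φ E υ e.1 ≤ timF φ E υ (e.1 * φ (e.2 : G))) := by
          refine ⟨hre1, Or.inr ?_⟩
          rw [hend, htim_h]
          omega
        have hlift : LiftE φ hφ E υ e = (g1, e.2) := by
          unfold LiftE
          rw [if_pos hcond, hell1]
        have hτ : τ (g1, e.2) = true := by
          have := hcyl e heE
          rw [hlift, hυ] at this
          exact this
        rw [hellh]
        refine Relation.ReflTransGen.tail (ih e.1 (by rw [hfe]; rfl)) ?_
        rw [hell1]
        exact ⟨e.2, Or.inl ⟨hτ, rfl⟩⟩
      | none =>
        rw [extendPsi_of_none φ hfe] at hext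
        rcases hD with ⟨hs1, _⟩ | ⟨hbs, he1⟩
        · rw [hfe] at hs1
          exact absurd hs1 (by simp)
        · obtain ⟨g0, hg0⟩ := Option.isSome_iff_exists.mp hbs
          rw [hg0] at hext
          obtain rfl := Option.some_injective _ hext.symm
          have hreb : reachedF φ E υ (e.1 * φ (e.2 : G)) := ⟨n, hbs⟩
          have htimb : timF φ E υ (e.1 * φ (e.2 : G)) ≤ n := tim_le φ hbs
          have hellb : ellF φ hφ E υ (e.1 * φ (e.2 : G)) = g0 := ell_eq φ hφ hg0
          have hcond : ¬ (reachedF φ E υ e.1 ∧ (¬ reachedF φ E υ (e.1 * φ (e.2 : G)) ∨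
              timF φ E υ e.1 ≤ timF φ E υ (e.1 * φ (e.2 : G)))) := by
            rintro ⟨-, hor⟩
            rcases hor with hor | hor
            · exact hor hreb
            · have he1tim : timF φ E υ e.1 = n + 1 := by rw [he1, htim_h]
              rw [he1tim] at hor
              omega
          have hlift : LiftE φ hφ E υ e = (g0 * ((e.2 : S) : G)⁻¹, e.2) := by
            unfold LiftE
            rw [if_neg hcond, if_pos hreb, hellb]
          have hτ : τ (g0 * ((e.2 : S) : G)⁻¹, e.2) = true := by
            have := hcyl e heE
            rw [hlift, hυ] at this
            exact this
          rw [hellh]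
          refine Relation.ReflTransGen.tail (ih (e.1 * φ (e.2 : G)) hbs) ?_
          rw [hellb]
          refine ⟨e.2, Or.inr ⟨hτ, ?_⟩⟩
          simp only [setGens]
          group

lemma tim_gt {E : Finset (H × S)} {υ : H × S → Bool} {n : ℕ} {h : H}
    (hnone : psiSeq φ E υ n h = none) (hr : reachedF φ E υ h) :
    n < timF φ E υ h := by
  by_contra hle
  push_neg at hle
  obtain ⟨g0, hg0⟩ := Option.isSome_iff_exists.mp (tim_mem φ hr)
  rw [psiSeq_persist_le φ hle hg0] at hnone
  exact Option.some_ne_none _ hnone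

lemma agree_of_isSome (hφ : Function.Surjective φ) {E : Finset (H × S)}
    {υ υ' : H × S → Bool} {n : ℕ}
    (Hk : ∀ k ≤ n, psiSeq φ E υ k = psiSeq φ E υ' k)
    {x : H} (hx : (psiSeq φ E υ n x).isSome = true) :
    reachedF φ E υ x ∧ reachedF φ E υ' x ∧ timF φ E υ x = timF φ E υ' x ∧
      ellF φ hφ E υ x = ellF φ hφ E υ' x := by
  have hx' : (psiSeq φ E υ' n x).isSome = true := by rw [← Hk n le_rfl]; exact hx
  have hr : reachedF φ E υ x := ⟨n, hx⟩
  have hr' : reachedF φ E υ' x := ⟨n, hx'⟩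
  have h1 : timF φ E υ x ≤ n := tim_le φ hx
  have h1' : timF φ E υ' x ≤ n := tim_le φ hx'
  have h2 : timF φ E υ' x ≤ timF φ E υ x := by
    have := tim_mem φ hr
    rw [Hk _ h1] at this
    exact tim_le φ this
  have h2' : timF φ E υ x ≤ timF φ E υ' x := by
    have := tim_mem φ hr'
    rw [← Hk _ h1'] at this
    exact tim_le φ this
  have htim : timF φ E υ x = timF φ E υ' x := le_antisymm h2' h2
  refine ⟨hr, hr', htim, ?_⟩
  rw [ellF, ellF, htim, Hk _ (htim ▸ h1)]

lemma LiftE_agree (hφ : Function.Surjective φ) {E : Finset (H × S)}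
    {υ υ' : H × S → Bool} {n : ℕ}
    (Hk : ∀ k ≤ n, psiSeq φ E υ k = psiSeq φ E υ' k) {e : H × S}
    (hx : (psiSeq φ E υ n e.1).isSome = true ∨
      (psiSeq φ E υ n (e.1 * φ (e.2 : G))).isSome = true) :
    LiftE φ hφ E υ e = LiftE φ hφ E υ' e := by
  by_cases hsa : (psiSeq φ E υ n e.1).isSome = true
  · obtain ⟨hra, hra', hta, hea⟩ := agree_of_isSome φ hφ Hk hsa
    by_cases hsb : (psiSeq φ E υ n (e.1 * φ (e.2 : G))).isSome = true
    · obtain ⟨hrb, hrb', htb, heb⟩ := agree_of_isSome φ hφ Hk hsb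
      by_cases hc1 : reachedF φ E υ e.1 ∧ (¬ reachedF φ E υ (e.1 * φ (e.2 : G)) ∨
          timF φ E υ e.1 ≤ timF φ E υ (e.1 * φ (e.2 : G)))
      · have hc1' : reachedF φ E υ' e.1 ∧ (¬ reachedF φ E υ' (e.1 * φ (e.2 : G)) ∨
            timF φ E υ' e.1 ≤ timF φ E υ' (e.1 * φ (e.2 : G))) := by
          refine ⟨hra', ?_⟩
          rcases hc1.2 with hor | hor
          · exact absurd hrb hor
          · exact Or.inr (hta ▸ htb ▸ hor)
        unfold LiftE
        rw [if_pos hc1, if_pos hc1', hea]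
      · have hc1' : ¬ (reachedF φ E υ' e.1 ∧ (¬ reachedF φ E υ' (e.1 * φ (e.2 : G)) ∨
            timF φ E υ' e.1 ≤ timF φ E υ' (e.1 * φ (e.2 : G)))) := by
          rintro ⟨-, hor⟩
          refine hc1 ⟨hra, ?_⟩
          rcases hor with hor | hor
          · exact absurd hrb' hor
          · exact Or.inr (hta ▸ htb ▸ hor)
        unfold LiftE
        rw [if_neg hc1, if_neg hc1', if_pos hrb, if_pos hrb', heb]
    · have hbnone : psiSeq φ E υ n (e.1 * φ (e.2 : G)) = none :=
        Option.not_isSome_iff_eq_none.mp (by simpa using hsb)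
      have hbnone' : psiSeq φ E υ' n (e.1 * φ (e.2 : G)) = none := by
        rw [← Hk n le_rfl]; exact hbnone
      have hc1 : reachedF φ E υ e.1 ∧ (¬ reachedF φ E υ (e.1 * φ (e.2 : G)) ∨
          timF φ E υ e.1 ≤ timF φ E υ (e.1 * φ (e.2 : G))) := by
        refine ⟨hra, ?_⟩
        by_cases hrb : reachedF φ E υ (e.1 * φ (e.2 : G))
        · have := tim_gt φ hbnone hrb
          have := tim_le φ hsa
          exact Or.inr (by omega)
        · exact Or.inl hrb
      have hc1' : reachedF φ E υ' e.1 ∧ (¬ reachedF φ E υ' (e.1 * φ (e.2 : G)) ∨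
          timF φ E υ' e.1 ≤ timF φ E υ' (e.1 * φ (e.2 : G))) := by
        refine ⟨hra', ?_⟩
        by_cases hrb' : reachedF φ E υ' (e.1 * φ (e.2 : G))
        · have hgt := tim_gt φ hbnone' hrb'
          have hle := tim_le φ (show (psiSeq φ E υ' n e.1).isSome = true by
            rw [← Hk n le_rfl]; exact hsa)
          exact Or.inr (by omega)
        · exact Or.inl hrb'
      unfold LiftE
      rw [if_pos hc1, if_pos hc1', hea]
  · have hanone : psiSeq φ E υ n e.1 = none :=
      Option.not_isSome_iff_eq_none.mp (by simpa using hsa)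
    have hanone' : psiSeq φ E υ' n e.1 = none := by rw [← Hk n le_rfl]; exact hanone
    have hsb : (psiSeq φ E υ n (e.1 * φ (e.2 : G))).isSome = true := hx.resolve_left hsa
    obtain ⟨hrb, hrb', htb, heb⟩ := agree_of_isSome φ hφ Hk hsb
    have htble : timF φ E υ (e.1 * φ (e.2 : G)) ≤ n := tim_le φ hsb
    have htble' : timF φ E υ' (e.1 * φ (e.2 : G)) ≤ n := htb ▸ htble
    have hc1 : ¬ (reachedF φ E υ e.1 ∧ (¬ reachedF φ E υ (e.1 * φ (e.2 : G)) ∨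
        timF φ E υ e.1 ≤ timF φ E υ (e.1 * φ (e.2 : G)))) := by
      rintro ⟨hra, hor⟩
      rcases hor with hor | hor
      · exact hor hrb
      · have := tim_gt φ hanone hra
        omega
    have hc1' : ¬ (reachedF φ E υ' e.1 ∧ (¬ reachedF φ E υ' (e.1 * φ (e.2 : G)) ∨
        timF φ E υ' e.1 ≤ timF φ E υ' (e.1 * φ (e.2 : G)))) := by
      rintro ⟨hra', hor⟩
      rcases hor with hor | hor
      · exact hor hrb'
      · have := tim_gt φ hanone' hra'
        omega
    unfold LiftE
    rw [if_neg hc1, if_neg hc1', if_pos hrb, if_pos hrb', heb]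

lemma runs_eq (hφ : Function.Surjective φ) {E : Finset (H × S)} {υ υ' : H × S → Bool}
    {τ : Config (G × S)} (hcyl : ∀ e ∈ E, τ (LiftE φ hφ E υ e) = υ e)
    (hcyl' : ∀ e ∈ E, τ (LiftE φ hφ E υ' e) = υ' e) :
    ∀ n, psiSeq φ E υ n = psiSeq φ E υ' n := by
  have key : ∀ n, ∀ k ≤ n, psiSeq φ E υ k = psiSeq φ E υ' k := by
    intro n
    induction n with
    | zero =>
      intro k hk
      obtain rfl := Nat.le_zero.mp hk
      rfl
    | succ n ih =>
      intro k hk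
      rcases Nat.lt_succ_iff_lt_or_eq.mp (Nat.lt_succ_of_le hk) with hlt | rfl
      · exact ih k (Nat.lt_succ_iff.mp hlt)
      · rw [psiSeq_succ, psiSeq_succ, ← ih n le_rfl]
        refine stepPsi_congr φ fun h' _ => ?_
        ext e
        rw [mem_newCands φ, mem_newCands φ]
        have hval : ∀ (hD : ((psiSeq φ E υ n e.1).isSome = true ∧ e.1 * φ (e.2 : G) = h') ∨
            ((psiSeq φ E υ n (e.1 * φ (e.2 : G))).isSome = true ∧ e.1 = h')),
            e ∈ E → υ e = υ' e := by
          intro hD heE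
          have hx : (psiSeq φ E υ n e.1).isSome = true ∨
              (psiSeq φ E υ n (e.1 * φ (e.2 : G))).isSome = true := by
            rcases hD with ⟨h1, _⟩ | ⟨h1, _⟩
            · exact Or.inl h1
            · exact Or.inr h1
          rw [← hcyl e heE, ← hcyl' e heE, LiftE_agree φ hφ ih hx]
        constructor
        · rintro ⟨heE, hυe, hD⟩
          exact ⟨heE, (hval hD heE) ▸ hυe, hD⟩
        · rintro ⟨heE, hυe, hD⟩
          refine ⟨heE, ?_, hD⟩
          rw [hval hD heE]
          exact hυe
  exact fun n => key n n le_rfl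

lemma pattern_eq (hφ : Function.Surjective φ) {E : Finset (H × S)} {υ υ' : H × S → Bool}
    {τ : Config (G × S)} (hcyl : ∀ e ∈ E, τ (LiftE φ hφ E υ e) = υ e)
    (hcyl' : ∀ e ∈ E, τ (LiftE φ hφ E υ' e) = υ' e) :
    ∀ e ∈ E, υ e = υ' e := by
  intro e heE
  have hrun := runs_eq φ hφ hcyl hcyl'
  by_cases hx : ∃ n, (psiSeq φ E υ n e.1).isSome = true ∨
      (psiSeq φ E υ n (e.1 * φ (e.2 : G))).isSome = true
  · obtain ⟨n, hn⟩ := hx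
    rw [← hcyl e heE, ← hcyl' e heE, LiftE_agree φ hφ (fun k _ => hrun k) hn]
  · push_neg at hx
    have hra : ¬ reachedF φ E υ e.1 := fun ⟨n, hn⟩ => (hx n).1 hn
    have hrb : ¬ reachedF φ E υ (e.1 * φ (e.2 : G)) := fun ⟨n, hn⟩ => (hx n).2 hn
    have hra' : ¬ reachedF φ E υ' e.1 := fun ⟨n, hn⟩ => (hx n).1 (by rw [hrun n]; exact hn)
    have hrb' : ¬ reachedF φ E υ' (e.1 * φ (e.2 : G)) :=
      fun ⟨n, hn⟩ => (hx n).2 (by rw [hrun n]; exact hn)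
    have hl : LiftE φ hφ E υ e = (lift0 φ hφ e.1, e.2) := by
      unfold LiftE
      rw [if_neg (fun hcc => hra hcc.1), if_neg hrb]
    have hl' : LiftE φ hφ E υ' e = (lift0 φ hφ e.1, e.2) := by
      unfold LiftE
      rw [if_neg (fun hcc => hra' hcc.1), if_neg hrb']
    rw [← hcyl e heE, ← hcyl' e heE, hl, hl']

end Explore

section FiniteBound

variable {G H : Type*} [Group G] [Group H] {S : Set G} (φ : G →* H)
variable [LinearOrder (H × S)]

open scoped Classical

/-- A pattern on a finite edge set, extended by `false`. -/
noncomputable def pat (E : Finset (H × S)) (σ : E → Bool) : H × S → Bool :=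
  fun e => if he : e ∈ E then σ ⟨e, he⟩ else false

omit [Group G] [Group H] [LinearOrder (H × ↑S)] in
lemma pat_supp {E : Finset (H × S)} {σ : E → Bool} {e : H × S} (h : pat E σ e = true) :
    e ∈ E := by
  by_contra hne
  unfold pat at h
  rw [dif_neg hne] at h
  exact Bool.noConfusion h

omit [Group G] [Group H] [LinearOrder (H × ↑S)] in
lemma pat_mem {E : Finset (H × S)} {σ : E → Bool} {e : H × S} (he : e ∈ E) :
    pat E σ e = σ ⟨e, he⟩ :=
  dif_pos he

omit [Group G] [Group H] [LinearOrder (H × ↑S)] in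
lemma restr_eq_pat {E : Finset (H × S)} {σ : E → Bool} {ω : Config (H × S)}
    (hω : ∀ e ∈ E, ω e = pat E σ e) : restr E ω = pat E σ := by
  funext e
  by_cases he : e ∈ E
  · rw [restr_mem E ω he]
    exact hω e he
  · unfold restr pat
    rw [if_neg he, dif_neg he]

lemma finite_bound (hφ : Function.Surjective φ) {p : ℝ}
    (μG : Measure (Config (G × S))) (μH : Measure (Config (H × S)))
    (hμG : IsBernoulli p μG) (hμH : IsBernoulli p μH)
    (E : Finset (H × S)) (h : H) :
    μH {ω | Conn (fun s : S => φ (s : G)) (restr E ω) 1 h} ≤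
      μG (⋃ x : {x : G // φ x = h}, {τ : Config (G × S) | Conn (setGens S) τ 1 (x : G)}) := by
  classical
  set C := {σ : E → Bool // Conn (fun s : S => φ (s : G)) (pat E σ) 1 h} with hC
  have hHeq : {ω : Config (H × S) | Conn (fun s : S => φ (s : G)) (restr E ω) 1 h} =
      ⋃ σ : C, {ω | ∀ e ∈ E, ω e = pat E σ.1 e} := by
    ext ω
    simp only [Set.mem_setOf_eq, Set.mem_iUnion]
    constructor
    · intro hconn
      have hpr : pat E (fun e : E => ω e.1) = restr E ω := by
        funext e
        by_cases he : e ∈ E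
        · rw [pat_mem he, restr_mem E ω he]
        · unfold pat restr
          rw [if_neg he, dif_neg he]
      exact ⟨⟨fun e : E => ω e.1, by rw [hpr]; exact hconn⟩, fun e he => by rw [pat_mem he]⟩
    · rintro ⟨σ, hσ⟩
      rw [restr_eq_pat hσ]
      exact σ.2
  have hdisj : Pairwise (Function.onFun Disjoint fun σ : C =>
      {ω : Config (H × S) | ∀ e ∈ E, ω e = pat E σ.1 e}) := by
    intro σ σ' hne
    refine Set.disjoint_left.mpr fun ω hω hω' => hne ?_
    apply Subtype.ext
    funext e
    have h1 := hω e.1 e.2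
    have h2 := hω' e.1 e.2
    rw [pat_mem e.2] at h1 h2
    rw [← h1, ← h2]
  have hmeas : ∀ σ : C, MeasurableSet {ω : Config (H × S) | ∀ e ∈ E, ω e = pat E σ.1 e} :=
    fun σ => measurableSet_depends E _ (fun ω ω' hag hmem e he => by
      rw [← hag e he]; exact hmem e he)
  rw [hHeq, measure_iUnion hdisj hmeas]
  set Lσ : C → Set (Config (G × S)) := fun σ =>
    {τ | ∀ e ∈ E, τ (LiftE φ hφ E (pat E σ.1) e) = pat E σ.1 e} with hLσ
  have hGdisj : Pairwise (Function.onFun Disjoint Lσ) := by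
    intro σ σ' hne
    refine Set.disjoint_left.mpr fun τ hτ hτ' => hne ?_
    apply Subtype.ext
    funext e
    have := pattern_eq φ hφ hτ hτ' e.1 e.2
    rw [pat_mem e.2, pat_mem e.2] at this
    exact this
  have hGmeas : ∀ σ : C, MeasurableSet (Lσ σ) :=
    fun σ => measurableSet_depends (E.image (LiftE φ hφ E (pat E σ.1))) _
      (fun τ τ' hag hmem e he => by
        rw [← hag _ (Finset.mem_image_of_mem _ he)]; exact hmem e he)
  have hLpair : ∀ (σ : C) (e : H × S), e ∈ E →
      (φ ((LiftE φ hφ E (pat E σ.1) e)).1, ((LiftE φ hφ E (pat E σ.1) e)).2) = e := by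
    intro σ e he
    exact Prod.ext (LiftE_fst φ hφ E (pat E σ.1) e) rfl
  have hterm : ∀ σ : C, μH {ω : Config (H × S) | ∀ e ∈ E, ω e = pat E σ.1 e} = μG (Lσ σ) := by
    intro σ
    rw [hμH E (pat E σ.1)]
    have hLeq : Lσ σ = {τ : Config (G × S) | ∀ e' ∈ E.image (LiftE φ hφ E (pat E σ.1)),
        τ e' = pat E σ.1 (φ e'.1, e'.2)} := by
      ext τ
      simp only [hLσ, Set.mem_setOf_eq]
      constructor
      · intro hτ e' he'
        obtain ⟨e, he, rfl⟩ := Finset.mem_image.mp he'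
        rw [hτ e he, hLpair σ e he]
      · intro hτ e he
        have := hτ _ (Finset.mem_image_of_mem _ he)
        rw [this, hLpair σ e he]
    rw [hLeq, hμG (E.image (LiftE φ hφ E (pat E σ.1)))
      (fun e' => pat E σ.1 (φ e'.1, e'.2)),
      Finset.prod_image (fun e _ e' _ heq => LiftE_inj φ hφ E (pat E σ.1) heq)]
    refine Finset.prod_congr rfl fun e he => ?_
    rw [hLpair σ e he]
  calc (∑' σ : C, μH {ω : Config (H × S) | ∀ e ∈ E, ω e = pat E σ.1 e})
      = ∑' σ : C, μG (Lσ σ) := tsum_congr hterm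
    _ = μG (⋃ σ : C, Lσ σ) := (measure_iUnion hGdisj hGmeas).symm
    _ ≤ μG (⋃ x : {x : G // φ x = h}, {τ : Config (G × S) | Conn (setGens S) τ 1 (x : G)}) := by
      refine measure_mono (Set.iUnion_subset fun σ τ hτ => ?_)
      have hreach : reachedF φ E (pat E σ.1) h :=
        complete φ hφ (fun e he => pat_supp he) σ.2
      obtain ⟨n, hn⟩ := hreach
      have hconnG := sound φ hφ hτ n h hn
      exact Set.mem_iUnion.mpr ⟨⟨ellF φ hφ E (pat E σ.1) h, phi_ell φ hφ E (pat E σ.1) h⟩, hconnG⟩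

end FiniteBound


end PercAux
/-- For a surjective homomorphism `φ : G → H` and a finite generating
set `S` of `G`, the expected cluster size of the identity in the Cayley graph of `H` with
edge set `H × S` (the edge `(h,s)` joining `h` and `h·φ(s)`) is at most that in the
Cayley graph of `(G,S)`, for every `p ∈ [0,1]`. -/
theorem expected_cluster_size_quotient_le
    {G H : Type*} [Group G] [Group H]
    (S : Set G) (hfin : S.Finite) (hgen : Subgroup.closure S = ⊤)
    (φ : G →* H) (hφ : Function.Surjective φ)
    (p : ℝ) (hp : p ∈ Set.Icc (0 : ℝ) 1)
    (μG : Measure (Config (G × S))) (μH : Measure (Config (H × S)))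
    (hμG : IsBernoulli p μG) (hμH : IsBernoulli p μH) :
    chi (fun s : S => φ (s : G)) μH ≤ chi (setGens S) μG := by
  classical
  haveI : Finite S := hfin.to_subtype
  haveI : Countable G := PercAux.countable_of_closure_eq_top hfin hgen
  haveI : Countable H := hφ.countable
  letI : Encodable (H × S) := Encodable.ofCountable _
  letI : LinearOrder (H × S) := LinearOrder.lift' Encodable.encode Encodable.encode_injective
  rw [PercAux.chi_eq_tsum (fun s : S => φ (s : G)) μH, PercAux.chi_eq_tsum (setGens S) μG]
  have step1 : ∀ h : H, μH {ω | Conn (fun s : S => φ (s : G)) ω 1 h} ≤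
      μG (⋃ x : {x : G // φ x = h}, {τ : Config (G × S) | Conn (setGens S) τ 1 (x : G)}) := by
    intro h
    rw [PercAux.measure_conn_eq_iSup]
    exact iSup_le fun E => PercAux.finite_bound φ hφ μG μH hμG hμH E h
  calc (∑' h : H, μH {ω | Conn (fun s : S => φ (s : G)) ω 1 h})
      ≤ ∑' h : H, μG (⋃ x : {x : G // φ x = h},
          {τ : Config (G × S) | Conn (setGens S) τ 1 (x : G)}) :=
        ENNReal.tsum_le_tsum step1
    _ ≤ ∑' h : H, ∑' x : {x : G // φ x = h},
          μG {τ : Config (G × S) | Conn (setGens S) τ 1 (x : G)} :=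
        ENNReal.tsum_le_tsum fun h => measure_iUnion_le _
    _ = ∑' p : Σ h : H, {x : G // φ x = h},
          μG {τ : Config (G × S) | Conn (setGens S) τ 1 (p.2 : G)} :=
        (ENNReal.tsum_sigma' (fun p : Σ h : H, {x : G // φ x = h} =>
          μG {τ : Config (G × S) | Conn (setGens S) τ 1 (p.2 : G)})).symm
    _ = ∑' x : G, μG {τ : Config (G × S) | Conn (setGens S) τ 1 x} :=
        Equiv.tsum_eq (Equiv.sigmaFiberEquiv φ)
          (fun x => μG {τ : Config (G × S) | Conn (setGens S) τ 1 x})
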